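/- Let k ≥ 2 and let G_k be the graph on [k] × [k] obtained from the grid P_k □ P_k by adding edges joining (0,j) to (k−1, k−j−1) and (j,0) to (k−j−1, k−1) for all j ∈ [k]. Then G_k contains an odd cycle; in particular G_k is not bipartite. -/

import Mathlib

/-- One-directional edge relation of the projective grid graph `G_k`. -/
def gkRel (k : ℕ) (u v : Fin k × Fin k) : Prop :=
  (u.1 = v.1 ∧ (u.2 : ℕ) + 1 = (v.2 : ℕ)) ∨
  (u.2 = v.2 ∧ (u.1 : ℕ) + 1 = (v.1 : ℕ)) ∨
  ((u.1 : ℕ) = 0 ∧ (v.1 : ℕ) = k - 1 ∧ (u.2 : ℕ) + (v.2 : ℕ) = k - 1) ∨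
  ((u.2 : ℕ) = 0 ∧ (v.2 : ℕ) = k - 1 ∧ (u.1 : ℕ) + (v.1 : ℕ) = k - 1)

/-- The projective quadrangulation `G_k`: the grid `P_k □ P_k` with added edges
`(0,j)–(k−1,k−j−1)` and `(j,0)–(k−j−1,k−1)`. -/
def Gk (k : ℕ) : SimpleGraph (Fin k × Fin k) where
  Adj u v := u ≠ v ∧ (gkRel k u v ∨ gkRel k v u)
  symm := by
    constructor
    intro u v h
    exact ⟨h.1.symm, h.2.symm⟩
  loopless := by
    constructor
    intro u h
    exact h.1 rfl

instance (k : ℕ) : DecidableRel (Gk k).Adj := by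
  intro u v
  unfold Gk gkRel
  infer_instance


open SimpleGraph

variable {V : Type*} {G : SimpleGraph V}

def walkOfFn (G : SimpleGraph V) (f : ℕ → V) :
    ∀ n, (∀ i, i < n → G.Adj (f i) (f (i+1))) → G.Walk (f 0) (f n)
  | 0, _ => Walk.nil
  | n+1, h =>
      (walkOfFn G f n fun i hi => h i (Nat.lt_succ_of_lt hi)).concat (h n (Nat.lt_succ_self n))

lemma walkOfFn_length (f : ℕ → V) (n : ℕ) (h : ∀ i, i < n → G.Adj (f i) (f (i+1))) :
    (walkOfFn G f n h).length = n := by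
  induction n with
  | zero => rfl
  | succ n ih => simp [walkOfFn, Walk.length_concat, ih]

lemma walkOfFn_support (f : ℕ → V) (n : ℕ) (h : ∀ i, i < n → G.Adj (f i) (f (i+1))) :
    (walkOfFn G f n h).support = (List.range (n+1)).map f := by
  induction n with
  | zero => rfl
  | succ n ih =>
      simp only [walkOfFn, Walk.support_concat, ih, List.range_succ (n := n+1)]
      simp

lemma walkOfFn_edges (f : ℕ → V) (n : ℕ) (h : ∀ i, i < n → G.Adj (f i) (f (i+1)))
    {e : Sym2 V} (he : e ∈ (walkOfFn G f n h).edges) :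
    ∃ i, i < n ∧ e = s(f i, f (i+1)) := by
  induction n with
  | zero => simp [walkOfFn] at he
  | succ n ih =>
      simp only [walkOfFn, Walk.edges_concat, List.concat_eq_append, List.mem_append,
        List.mem_singleton] at he
      rcases he with he | he
      · obtain ⟨i, hi, rfl⟩ := ih _ he
        exact ⟨i, Nat.lt_succ_of_lt hi, rfl⟩
      · exact ⟨n, Nat.lt_succ_self n, he⟩

lemma color_walk (C : G.Coloring (Fin 2)) {u v : V} (p : G.Walk u v) :
    (C u = C v) ↔ Even p.length := by
  induction p with
  | nil => simp
  | cons h q ih =>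
      have hne : C _ ≠ C _ := C.valid h
      have key : ∀ a b c : Fin 2, a ≠ b → ((a = c) ↔ ¬ (b = c)) := by decide
      rw [Walk.length_cons, Nat.even_add_one, ← ih, key _ _ _ hne]
theorem stmt_10 (k : ℕ) (hk : 2 ≤ k) :
    (∃ (v : Fin k × Fin k) (c : (Gk k).Walk v v), c.IsCycle ∧ Odd c.length) ∧
      ¬(Gk k).Colorable 2 := by
  obtain ⟨n, rfl⟩ : ∃ n, k = n + 1 := ⟨k - 1, by omega⟩
  have hn : 1 ≤ n := by omega
  set f : ℕ → Fin (n+1) × Fin (n+1) :=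
    fun i => (⟨min (i - n) n, by omega⟩, ⟨min i n, by omega⟩) with hf
  have hadj : ∀ i, i < 2*n → (Gk (n+1)).Adj (f i) (f (i+1)) := by
    intro i hi
    refine ⟨?_, Or.inl ?_⟩
    · intro h
      have h1 := congrArg (fun p : Fin (n+1) × Fin (n+1) => (p.1 : ℕ)) h
      have h2 := congrArg (fun p : Fin (n+1) × Fin (n+1) => (p.2 : ℕ)) h
      simp [hf] at h1 h2
      omega
    · unfold gkRel
      rcases lt_or_ge i n with h | h
      · left
        refine ⟨Fin.ext ?_, ?_⟩ <;> simp [hf] <;> omega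
      · right; left
        refine ⟨Fin.ext ?_, ?_⟩ <;> simp [hf] <;> omega
  have hinj : ∀ i, i ≤ 2*n → ∀ j, j ≤ 2*n → f i = f j → i = j := by
    intro i hi j hj h
    have h1 := congrArg (fun p : Fin (n+1) × Fin (n+1) => (p.1 : ℕ)) h
    have h2 := congrArg (fun p : Fin (n+1) × Fin (n+1) => (p.2 : ℕ)) h
    simp [hf] at h1 h2
    omega
  let p : (Gk (n+1)).Walk (f 0) (f (2*n)) := walkOfFn (Gk (n+1)) f (2*n) hadj
  have hpath : p.IsPath := by
    rw [SimpleGraph.Walk.isPath_def, walkOfFn_support]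
    refine List.Nodup.map_on ?_ List.nodup_range
    intro i hi j hj h
    exact hinj i (by simpa using Nat.lt_succ_iff.mp (List.mem_range.mp hi)) j
      (by simpa using Nat.lt_succ_iff.mp (List.mem_range.mp hj)) h
  have hadj2 : (Gk (n+1)).Adj (f (2*n)) (f 0) := by
    refine ⟨?_, Or.inr ?_⟩
    · intro h
      have h2 := congrArg (fun p : Fin (n+1) × Fin (n+1) => (p.2 : ℕ)) h
      simp [hf] at h2
      omega
    · unfold gkRel
      right; right; left
      refine ⟨?_, ?_, ?_⟩ <;> simp [hf] <;> omega
  have hnotmem : s(f (2*n), f 0) ∉ p.edges := by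
    intro hmem
    obtain ⟨i, hi, he⟩ := walkOfFn_edges f (2*n) hadj hmem
    rw [Sym2.eq_iff] at he
    rcases he with ⟨h1, h2⟩ | ⟨h1, h2⟩
    · have h3 := congrArg (fun p : Fin (n+1) × Fin (n+1) => (p.2 : ℕ)) h2
      simp [hf] at h3
      omega
    · have := hinj (2*n) (le_refl _) (i+1) (by omega) h1
      have := hinj 0 (by omega) i (by omega) h2
      omega
  have hcyc : (SimpleGraph.Walk.cons hadj2 (⟨p, hpath⟩ : (Gk (n+1)).Path (f 0) (f (2*n))) :
      (Gk (n+1)).Walk (f (2*n)) (f (2*n))).IsCycle :=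
    SimpleGraph.Path.cons_isCycle ⟨p, hpath⟩ hadj2 hnotmem
  have hlen : (SimpleGraph.Walk.cons hadj2 p).length = 2*n + 1 := by
    rw [SimpleGraph.Walk.length_cons, walkOfFn_length]
  refine ⟨⟨f (2*n), SimpleGraph.Walk.cons hadj2 p, hcyc, by rw [hlen]; exact ⟨n, by ring⟩⟩, ?_⟩
  rintro ⟨C⟩
  have := (color_walk C (SimpleGraph.Walk.cons hadj2 p)).mp rfl
  rw [hlen, Nat.even_add_one] at this
  exact this (even_two_mul n)
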